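/- For k > 1, any set of kq planes in F_q^3 covers at least (1 − 1/(k − 1 + k^{-1}))·q^3 points; similarly, any set of kq lines in F_q^2 covers at least (1 − 1/(k − 1 + k^{-1}))·q^2 points. -/

import Mathlib

open scoped Classical

open Finset Submodule Module in
private lemma count_key {X : Type} [Fintype X] (S : Finset (Set X)) (m r : ℕ)
    (hm : ∀ A ∈ S, (univ.filter (· ∈ A)).card = m)
    (hr : ∀ A ∈ S, ∀ B ∈ S, A ≠ B →
      (univ.filter (fun p => p ∈ A ∧ p ∈ B)).card ≤ r) :
    ((S.card : ℝ) * m) ^ 2 ≤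
      ((univ.filter (fun p : X => ∃ A ∈ S, p ∈ A)).card : ℝ)
        * (S.card * m + S.card ^ 2 * r) := by
  set C := univ.filter (fun p : X => ∃ A ∈ S, p ∈ A) with hC
  set d : X → ℕ := fun p => (S.filter (fun A => p ∈ A)).card with hd
  have hsum : ∑ p ∈ C, d p = S.card * m := by
    have h1 : ∑ p ∈ C, d p = ∑ p : X, d p := by
      apply Finset.sum_filter_of_ne
      intro p _ hp
      rw [hd] at hp
      simp only [ne_eq] at hp
      have : (S.filter (fun A => p ∈ A)).Nonempty := by
        rw [Finset.nonempty_iff_ne_empty]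
        intro h; exact hp (by simp [h])
      obtain ⟨A, hA⟩ := this
      simp only [Finset.mem_filter] at hA
      exact ⟨A, hA.1, hA.2⟩
    rw [h1]
    have h2 : ∑ p : X, d p = ∑ A ∈ S, (univ.filter (· ∈ A)).card := by
      simp only [hd, Finset.card_filter]
      rw [Finset.sum_comm]
    rw [h2, Finset.sum_congr rfl hm, Finset.sum_const, smul_eq_mul]
  have hsq : ∑ p : X, d p ^ 2 ≤ S.card * m + S.card ^ 2 * r := by
    have h2 : ∑ p : X, d p ^ 2
        = ∑ A ∈ S, ∑ B ∈ S, (univ.filter (fun p => p ∈ A ∧ p ∈ B)).card := by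
      simp only [hd, Finset.card_filter, sq, Finset.sum_mul_sum]
      rw [Finset.sum_comm]
      refine Finset.sum_congr rfl fun A _ => ?_
      rw [Finset.sum_comm]
      refine Finset.sum_congr rfl fun B _ => ?_
      refine Finset.sum_congr rfl fun p _ => ?_
      by_cases h1 : p ∈ A <;> by_cases h2 : p ∈ B <;> simp [h1, h2]
    rw [h2]
    calc ∑ A ∈ S, ∑ B ∈ S, (univ.filter (fun p => p ∈ A ∧ p ∈ B)).card
        ≤ ∑ A ∈ S, (m + S.card * r) := by
          refine Finset.sum_le_sum fun A hA => ?_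
          rw [← Finset.add_sum_erase _ _ hA]
          gcongr
          · have : (univ.filter (fun p => p ∈ A ∧ p ∈ A)) = univ.filter (· ∈ A) := by
              simp
            rw [this, hm A hA]
          · calc ∑ B ∈ S.erase A, (univ.filter (fun p => p ∈ A ∧ p ∈ B)).card
                ≤ ∑ B ∈ S.erase A, r := by
                  refine Finset.sum_le_sum fun B hB => ?_
                  exact hr A hA B (Finset.mem_of_mem_erase hB)
                    (fun h => (Finset.ne_of_mem_erase hB) h.symm)
              _ ≤ S.card * r := by
                  rw [Finset.sum_const, smul_eq_mul]
                  exact Nat.mul_le_mul_right r (Finset.card_erase_le.trans le_rfl)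
      _ = S.card * m + S.card ^ 2 * r := by
          rw [Finset.sum_const, smul_eq_mul, Nat.mul_add, sq, Nat.mul_assoc]
  have cs : ((∑ p ∈ C, d p : ℕ) : ℝ) ^ 2 ≤ (C.card : ℝ) * ∑ p ∈ C, (d p : ℝ) ^ 2 := by
    have := sq_sum_le_card_mul_sum_sq (s := C) (f := fun p => (d p : ℝ))
    push_cast
    exact_mod_cast this
  have hsub : ∑ p ∈ C, (d p : ℝ) ^ 2 ≤ ((S.card * m + S.card ^ 2 * r : ℕ) : ℝ) := by
    calc ∑ p ∈ C, (d p : ℝ) ^ 2 ≤ ∑ p : X, (d p : ℝ) ^ 2 := by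
          apply Finset.sum_le_sum_of_subset_of_nonneg (Finset.filter_subset _ _)
          intros; positivity
      _ = ((∑ p : X, d p ^ 2 : ℕ) : ℝ) := by push_cast; ring
      _ ≤ _ := by exact_mod_cast hsq
  rw [hsum] at cs
  push_cast at cs hsub ⊢
  nlinarith [cs, hsub, Finset.card_filter_le (univ : Finset X) (fun p : X => ∃ A ∈ S, p ∈ A),
    mul_nonneg (Nat.cast_nonneg C.card) (sub_nonneg.mpr hsub)]

section Cosets

open Finset Submodule Module

variable {F V : Type} [Field F] [Fintype F] [AddCommGroup V] [Module F V] [Fintype V]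

private lemma coset_card (a : V) (W : Submodule F V) :
    (univ.filter (fun x : V => x - a ∈ W)).card = Fintype.card W := by
  rw [← Fintype.card_subtype]
  exact Fintype.card_congr
    ⟨fun x => ⟨x.1 - a, x.2⟩, fun w => ⟨a + w.1, by simp⟩,
     fun x => by simp, fun w => by simp⟩

private lemma coset_inter_card (a₁ a₂ : V) (W₁ W₂ : Submodule F V)
    (hne : {x : V | x - a₁ ∈ W₁} ≠ {x : V | x - a₂ ∈ W₂}) :
    (univ.filter (fun p : V => p - a₁ ∈ W₁ ∧ p - a₂ ∈ W₂)).card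
      ≤ Fintype.card ↥(W₁ ⊓ W₂) ∧
    ((univ.filter (fun p : V => p - a₁ ∈ W₁ ∧ p - a₂ ∈ W₂)).Nonempty → W₁ ≠ W₂) := by
  rcases Finset.eq_empty_or_nonempty
      (univ.filter (fun p : V => p - a₁ ∈ W₁ ∧ p - a₂ ∈ W₂)) with h | h
  · simp [h]
  obtain ⟨x₀, hx₀⟩ := h
  simp only [Finset.mem_filter, Finset.mem_univ, true_and] at hx₀
  constructor
  · rw [← Fintype.card_subtype]
    apply Fintype.card_le_of_injective
      (fun y => ⟨y.1 - x₀,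
        by have h := W₁.sub_mem y.2.1 hx₀.1
           rwa [show y.1 - a₁ - (x₀ - a₁) = y.1 - x₀ from by abel] at h,
        by have h := W₂.sub_mem y.2.2 hx₀.2
           rwa [show y.1 - a₂ - (x₀ - a₂) = y.1 - x₀ from by abel] at h⟩)
    intro y z h
    simp only [Subtype.mk_eq_mk, sub_left_inj] at h
    exact Subtype.ext (sub_left_inj.mp (congrArg Subtype.val h))
  · rintro _ rfl
    apply hne
    ext x
    simp only [Set.mem_setOf_eq]
    constructor
    · intro hx
      have := W₁.sub_mem hx hx₀.1
      have h2 : x - a₂ = (x - a₁) - (x₀ - a₁) + (x₀ - a₂) := by abel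
      rw [h2]; exact W₁.add_mem this hx₀.2
    · intro hx
      have := W₁.sub_mem hx hx₀.2
      have h2 : x - a₁ = (x - a₂) - (x₀ - a₂) + (x₀ - a₁) := by abel
      rw [h2]; exact W₁.add_mem this hx₀.1

private lemma coset_inter_le (n : ℕ) (a₁ a₂ : V) (W₁ W₂ : Submodule F V)
    (h₁ : finrank F W₁ = n) (h₂ : finrank F W₂ = n)
    (hne : {x : V | x - a₁ ∈ W₁} ≠ {x : V | x - a₂ ∈ W₂}) :
    (univ.filter (fun p : V => p - a₁ ∈ W₁ ∧ p - a₂ ∈ W₂)).card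
      ≤ Fintype.card F ^ (n - 1) := by
  have : FiniteDimensional F V := Module.Finite.of_finite
  obtain ⟨hle, hW⟩ := coset_inter_card a₁ a₂ W₁ W₂ hne
  rcases Finset.eq_empty_or_nonempty
      (univ.filter (fun p : V => p - a₁ ∈ W₁ ∧ p - a₂ ∈ W₂)) with h | h
  · simp [h]
  have hWne : W₁ ≠ W₂ := hW h
  have hlt : W₁ ⊓ W₂ < W₁ := by
    rcases lt_or_eq_of_le (inf_le_left : W₁ ⊓ W₂ ≤ W₁) with h' | h'
    · exact h'
    · exact absurd (Submodule.eq_of_le_of_finrank_le (h' ▸ inf_le_right)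
        (by rw [h₁, h₂])) hWne
  have hrk : finrank F ↥(W₁ ⊓ W₂) ≤ n - 1 := by
    have := Submodule.finrank_lt_finrank_of_lt hlt
    omega
  calc (univ.filter (fun p : V => p - a₁ ∈ W₁ ∧ p - a₂ ∈ W₂)).card
      ≤ Fintype.card ↥(W₁ ⊓ W₂) := hle
    _ = Fintype.card F ^ finrank F ↥(W₁ ⊓ W₂) := card_eq_pow_finrank
    _ ≤ Fintype.card F ^ (n - 1) :=
        Nat.pow_le_pow_right Fintype.card_pos hrk

/-- Main covering bound for families of cosets of `(e+1)`-dimensional subspaces. -/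
private lemma cover_bound (e : ℕ) (S : Finset (Set V))
    (hS : ∀ A ∈ S, ∃ (a : V) (W : Submodule F V),
      finrank F W = e + 1 ∧ A = {x | x - a ∈ W})
    (k : ℝ) (hk : 1 < k)
    (hcard : (S.card : ℝ) = k * (Fintype.card F : ℝ)) :
    (1 - 1 / (k - 1 + k⁻¹)) * (Fintype.card F : ℝ) ^ (e + 2)
      ≤ ((univ.filter (fun p : V => ∃ A ∈ S, p ∈ A)).card : ℝ) := by
  set q : ℕ := Fintype.card F with hqdef
  have hm : ∀ A ∈ S, (univ.filter (· ∈ A)).card = q ^ (e + 1) := by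
    intro A hA
    obtain ⟨a, W, hW, rfl⟩ := hS A hA
    have : (univ.filter (· ∈ {x : V | x - a ∈ W}))
        = univ.filter (fun x : V => x - a ∈ W) := by
      apply Finset.filter_congr
      intro x _
      simp [Set.mem_setOf_eq]
    rw [this, coset_card, card_eq_pow_finrank (K := F), hW]
  have hr : ∀ A ∈ S, ∀ B ∈ S, A ≠ B →
      (univ.filter (fun p : V => p ∈ A ∧ p ∈ B)).card ≤ q ^ e := by
    intro A hA B hB hAB
    obtain ⟨a₁, W₁, hW₁, rfl⟩ := hS A hA
    obtain ⟨a₂, W₂, hW₂, rfl⟩ := hS B hB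
    have heq : (univ.filter (fun p : V => p ∈ {x : V | x - a₁ ∈ W₁}
        ∧ p ∈ {x : V | x - a₂ ∈ W₂}))
        = univ.filter (fun p : V => p - a₁ ∈ W₁ ∧ p - a₂ ∈ W₂) := by
      apply Finset.filter_congr
      intro x _
      simp [Set.mem_setOf_eq]
    rw [heq]
    have := coset_inter_le (e + 1) a₁ a₂ W₁ W₂ hW₁ hW₂ hAB
    simpa using this
  have key := count_key S (q ^ (e + 1)) (q ^ e) hm hr
  set Cr : ℝ := ((univ.filter (fun p : V => ∃ A ∈ S, p ∈ A)).card : ℝ) with hCr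
  have hCr0 : 0 ≤ Cr := Nat.cast_nonneg _
  have hq1 : 1 ≤ q := Fintype.card_pos
  have hQ : (0 : ℝ) < (q : ℝ) := by exact_mod_cast Nat.lt_of_lt_of_le Nat.zero_lt_one hq1
  set Q : ℝ := (q : ℝ) with hQdef
  set R : ℝ := Q ^ e with hRdef
  have hR : (0 : ℝ) < R := by positivity
  have hk0 : (0 : ℝ) < k := lt_trans one_pos hk
  rw [hcard] at key
  push_cast at key
  -- key : (k * Q * Q^(e+1))^2 ≤ Cr * (k*Q*Q^(e+1) + (k*Q)^2 * Q^e)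
  have hpow1 : (Q : ℝ) ^ (e + 1) = R * Q := by rw [hRdef, pow_succ]
  have hpow2 : (Q : ℝ) ^ (e + 2) = R * Q ^ 2 := by
    rw [hRdef, ← pow_add]
  rw [hpow1] at key
  have key2 : k * (R * Q ^ 2) ≤ Cr * (1 + k) := by
    have hpos : (0 : ℝ) < k * (R * Q ^ 2) := by positivity
    refine le_of_mul_le_mul_right ?_ hpos
    calc (k * (R * Q ^ 2)) * (k * (R * Q ^ 2))
        = (k * Q * (R * Q)) ^ 2 := by ring
      _ ≤ Cr * (k * Q * (R * Q) + (k * Q) ^ 2 * R) := key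
      _ = (Cr * (1 + k)) * (k * (R * Q ^ 2)) := by ring
  rw [hpow2]
  have hden : (0 : ℝ) < k - 1 + k⁻¹ := by
    have : (0 : ℝ) < k⁻¹ := by positivity
    linarith
  have h1k : (0 : ℝ) < 1 + k := by linarith
  have hfrac : 1 - 1 / (k - 1 + k⁻¹) ≤ k / (1 + k) := by
    have e1 : 1 - 1 / (k - 1 + k⁻¹) = (k - 1 + k⁻¹ - 1) / (k - 1 + k⁻¹) := by
      field_simp
      rw [sub_div, div_self (ne_of_gt (by nlinarith : (0:ℝ) < k * (k - 1) + 1))]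
    rw [e1, div_le_div_iff₀ hden h1k]
    have hkinv : k⁻¹ * k = 1 := inv_mul_cancel₀ hk0.ne'
    nlinarith [hkinv, mul_pos (sub_pos.2 hk) (inv_pos.2 hk0)]
  calc (1 - 1 / (k - 1 + k⁻¹)) * (R * Q ^ 2)
      ≤ (k / (1 + k)) * (R * Q ^ 2) := by
        apply mul_le_mul_of_nonneg_right hfrac (by positivity)
    _ ≤ Cr := by
        rw [div_mul_eq_mul_div, div_le_iff₀ h1k]
        linarith [key2]

end Cosets

/-- `ℓ` is an (affine) line in `F^2`. -/
def IsLine2 {F : Type} [Field F] (ℓ : Set (Fin 2 → F)) : Prop :=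
  ∃ a b : Fin 2 → F, b ≠ 0 ∧ ℓ = {x | ∃ t : F, x = a + t • b}

/-- `π` is an (affine) plane in `F^3`. -/
def IsPlane {F : Type} [Field F] (π : Set (Fin 3 → F)) : Prop :=
  ∃ a u v : Fin 3 → F, LinearIndependent F ![u, v] ∧
    π = {x | ∃ s t : F, x = a + s • u + t • v}

section Reps

open Finset Submodule Module

variable {F : Type} [Field F]

private lemma plane_rep {π : Set (Fin 3 → F)} (h : IsPlane π) :
    ∃ (a : Fin 3 → F) (W : Submodule F (Fin 3 → F)),
      finrank F W = 1 + 1 ∧ π = {x | x - a ∈ W} := by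
  obtain ⟨a, u, v, hind, rfl⟩ := h
  refine ⟨a, span F {u, v}, ?_, ?_⟩
  · have hr : Set.range ![u, v] = {u, v} := by
      ext x
      simp [Matrix.range_cons, Matrix.range_empty, or_comm]
    have := finrank_span_eq_card hind
    rwa [hr, Fintype.card_fin] at this
  · ext x
    simp only [Set.mem_setOf_eq, mem_span_pair]
    constructor
    · rintro ⟨s, t, rfl⟩; exact ⟨s, t, by abel⟩
    · rintro ⟨s, t, hst⟩
      exact ⟨s, t, by rw [eq_comm, sub_eq_iff_eq_add] at hst; rw [hst]; abel⟩

private lemma line_rep {ℓ : Set (Fin 2 → F)} (h : IsLine2 ℓ) :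
    ∃ (a : Fin 2 → F) (W : Submodule F (Fin 2 → F)),
      finrank F W = 0 + 1 ∧ ℓ = {x | x - a ∈ W} := by
  obtain ⟨a, b, hb, rfl⟩ := h
  refine ⟨a, span F {b}, by simpa using finrank_span_singleton hb, ?_⟩
  ext x
  simp only [Set.mem_setOf_eq, mem_span_singleton]
  constructor
  · rintro ⟨t, rfl⟩; exact ⟨t, by abel⟩
  · rintro ⟨t, ht⟩
    exact ⟨t, by rw [eq_comm, sub_eq_iff_eq_add] at ht; rw [ht]; abel⟩

end Reps

/-- `kq` planes in `F_q^3` cover at least `(1 - 1/(k-1+k⁻¹)) q^3` points, and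
`kq` lines in `F_q^2` cover at least `(1 - 1/(k-1+k⁻¹)) q^2` points. -/
theorem stmt_16 (F : Type) [Field F] [Fintype F] (q : ℕ) (hq : q = Fintype.card F)
    (k : ℝ) (hk : 1 < k) :
    (∀ Ps : Finset (Set (Fin 3 → F)),
      (∀ π ∈ Ps, IsPlane π) → (Ps.card : ℝ) = k * q →
      (1 - 1 / (k - 1 + k⁻¹)) * (q : ℝ) ^ 3
        ≤ ((Finset.univ.filter (fun p : Fin 3 → F => ∃ π ∈ Ps, p ∈ π)).card : ℝ)) ∧
    (∀ L : Finset (Set (Fin 2 → F)),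
      (∀ ℓ ∈ L, IsLine2 ℓ) → (L.card : ℝ) = k * q →
      (1 - 1 / (k - 1 + k⁻¹)) * (q : ℝ) ^ 2
        ≤ ((Finset.univ.filter (fun p : Fin 2 → F => ∃ ℓ ∈ L, p ∈ ℓ)).card : ℝ)) := by
  subst hq
  constructor
  · intro Ps hPs hcard
    have := cover_bound (F := F) 1 Ps (fun A hA => plane_rep (hPs A hA)) k hk hcard
    simpa using this
  · intro L hL hcard
    have := cover_bound (F := F) 0 L (fun A hA => line_rep (hL A hA)) k hk hcard
    simpa using this
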